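/- Let Q be a self-adjoint contraction on a Hilbert space H (‖Q‖ ≤ 1), and suppose θ ∈ (0, 1/2) and f ∈ H satisfies ‖f‖ = 1, ‖Qf − f‖ ≤ θ, and lim_{k→∞} (1/k) ∑_{i=0}^{k−1} ⟨Q^i f, f⟩ = 0. Then there exists φ ∈ H with ‖(I − Q)φ‖² ≤ 32 θ ⟨φ, (I − Q)φ⟩ and ⟨φ, (I − Q)φ⟩ > 0. -/

import Mathlib

open Filter Finset
open scoped RealInnerProductSpace

theorem stmt0 {H : Type*} [NormedAddCommGroup H] [InnerProductSpace ℝ H] [CompleteSpace H]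
    (Q : H →L[ℝ] H) (hQsa : IsSelfAdjoint Q) (hQnorm : ‖Q‖ ≤ 1)
    (θ : ℝ) (hθ : θ ∈ Set.Ioo (0 : ℝ) (1/2))
    (f : H) (hf : ‖f‖ = 1) (hQf : ‖Q f - f‖ ≤ θ)
    (hlim : Tendsto (fun k : ℕ => (1 / (k : ℝ)) * ∑ i ∈ Finset.range k, ⟪(Q ^ i) f, f⟫)
      atTop (nhds 0)) :
    ∃ φ : H, ‖(1 - Q) φ‖ ^ 2 ≤ 32 * θ * ⟪φ, (1 - Q) φ⟫ ∧ 0 < ⟪φ, (1 - Q) φ⟫ := by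
  obtain ⟨hθ0, hθ2⟩ := hθ
  set a : ℕ → ℝ := fun i => ⟪(Q ^ i) f, f⟫ with ha
  set S : ℕ → ℝ := fun n => ∑ i ∈ Finset.range n, a i with hS
  have hQle : ∀ x : H, ‖Q x‖ ≤ ‖x‖ := by
    intro x
    calc ‖Q x‖ ≤ ‖Q‖ * ‖x‖ := Q.le_opNorm x
    _ ≤ 1 * ‖x‖ := mul_le_mul_of_nonneg_right hQnorm (norm_nonneg x)
    _ = ‖x‖ := one_mul _
  have hpow : ∀ n, ‖(Q ^ n) f‖ ≤ 1 := by
    intro n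
    induction n with
    | zero => simp [hf]
    | succ n ih =>
      rw [pow_succ']
      exact le_trans (hQle _) ih
  have hdev : ∀ n : ℕ, ‖(Q ^ n) f - f‖ ≤ n * θ := by
    intro n
    induction n with
    | zero => simp
    | succ n ih =>
      have h1 : (Q ^ (n+1)) f - f = Q ((Q ^ n) f - f) + (Q f - f) := by
        rw [pow_succ']
        rw [ContinuousLinearMap.mul_apply, map_sub]
        abel
      rw [h1]
      calc ‖Q ((Q ^ n) f - f) + (Q f - f)‖ ≤ ‖Q ((Q ^ n) f - f)‖ + ‖Q f - f‖ :=
        norm_add_le _ _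
      _ ≤ ‖(Q ^ n) f - f‖ + θ := add_le_add (hQle _) hQf
      _ ≤ n * θ + θ := by linarith
      _ = (n + 1 : ℕ) * θ := by push_cast; ring
  have ha_lb : ∀ i : ℕ, 1 - i * θ ≤ a i := by
    intro i
    have h1 : a i - 1 = ⟪(Q ^ i) f - f, f⟫ := by
      simp [ha, inner_sub_left, real_inner_self_eq_norm_sq, hf]
    have h2 : |⟪(Q ^ i) f - f, f⟫| ≤ ‖(Q ^ i) f - f‖ * ‖f‖ := abs_real_inner_le_norm _ _
    rw [hf, mul_one] at h2
    have h3 := abs_le.mp (le_trans h2 (hdev i))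
    linarith [h1 ▸ h3.1]
  -- pick m ≈ 1/(2θ)
  set m : ℕ := ⌈1 / (2 * θ)⌉₊ with hm
  have hm0 : 0 < (m : ℝ) := by
    have : (0:ℝ) < 1 / (2 * θ) := by positivity
    exact_mod_cast Nat.ceil_pos.mpr this
  have hmge : 1 / (2 * θ) ≤ (m : ℝ) := Nat.le_ceil _
  have hmlt : (m : ℝ) < 1 / (2 * θ) + 1 := Nat.ceil_lt_add_one (by positivity)
  have hSm : (m : ℝ) / 2 ≤ S m := by
    have h1 : ∀ i ∈ Finset.range m, (1 : ℝ) - i * θ ≤ a i := fun i _ => ha_lb i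
    have h2 : ∑ i ∈ Finset.range m, ((1:ℝ) - i * θ) ≤ S m := Finset.sum_le_sum h1
    have h3 : ∑ i ∈ Finset.range m, ((1:ℝ) - i * θ)
        = m - θ * (m * (m - 1) / 2) := by
      rw [Finset.sum_sub_distrib]
      have h3a : ∑ i ∈ Finset.range m, ((i:ℝ) * θ) = (∑ i ∈ Finset.range m, (i:ℝ)) * θ := by
        rw [← Finset.sum_mul]
      rw [h3a]
      have h4 : ∑ i ∈ Finset.range m, (i : ℝ) = m * (m - 1) / 2 := by
        induction m with
        | zero => simp
        | succ k ih => rw [Finset.sum_range_succ, ih]; push_cast; ring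
      rw [h4]
      simp
      ring
    have h5 : θ * ((m : ℝ) - 1) ≤ 1 / 2 := by
      have h5a : (m : ℝ) - 1 < 1 / (2 * θ) := by linarith
      have h5b : θ * (1 / (2*θ)) = 1/2 := by field_simp
      nlinarith
    nlinarith [hm0]
  have h2θm : (1:ℝ) ≤ m * (2 * θ) := by
    rw [div_le_iff₀ (by positivity)] at hmge
    linarith
  have hSmlb : 1 / (4 * θ) ≤ S m := by
    have : 1 / (4 * θ) ≤ (m : ℝ) / 2 := by
      rw [div_le_div_iff₀ (by positivity) (by norm_num)]
      nlinarith
    linarith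
  -- key existence
  have hexists : ∃ n : ℕ, 1 / (5 * θ) ≤ 2 * S n - S (2 * n) := by
    by_contra h
    push_neg at h
    set K : ℝ := 1 / (5 * θ) with hK
    have hK0 : 0 < K := by positivity
    have hiter : ∀ j : ℕ, 2 ^ j * (S m - K) + K ≤ S (2 ^ j * m) := by
      intro j
      induction j with
      | zero => simp
      | succ j ih =>
        have h1 := h (2 ^ j * m)
        have h2 : 2 ^ (j+1) * m = 2 * (2 ^ j * m) := by ring
        rw [h2, pow_succ]
        linarith
    have hδnum : 0 < S m - K := by
      have : K < 1 / (4 * θ) := by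
        rw [hK, div_lt_div_iff₀ (by positivity) (by positivity)]
        nlinarith
      linarith
    set δ : ℝ := (S m - K) / m with hδdef
    have hδ0 : 0 < δ := div_pos hδnum hm0
    have htend : Tendsto (fun j : ℕ =>
        (1 / ((2 ^ j * m : ℕ) : ℝ)) * ∑ i ∈ Finset.range (2 ^ j * m), a i)
        atTop (nhds 0) := by
      apply hlim.comp
      apply tendsto_atTop_mono (fun j => ?_) tendsto_id
      have h1 : j < 2 ^ j := (Nat.lt_two_pow_self (n := j))
      have hmnat : 1 ≤ m := by exact_mod_cast Nat.one_le_cast.mpr (by exact_mod_cast hm0)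
      calc (id j : ℕ) = j := rfl
      _ ≤ 2 ^ j := le_of_lt h1
      _ ≤ 2 ^ j * m := Nat.le_mul_of_pos_right _ (by omega)
    have hev : ∀ᶠ j : ℕ in atTop,
        (1 / ((2 ^ j * m : ℕ) : ℝ)) * ∑ i ∈ Finset.range (2 ^ j * m), a i < δ :=
      htend.eventually_lt_const hδ0
    obtain ⟨j, hj⟩ := hev.exists
    have hcast : ((2 ^ j * m : ℕ) : ℝ) = 2 ^ j * m := by push_cast; ring
    have hNpos : (0:ℝ) < 2 ^ j * m := by positivity
    have hge : δ ≤ (1 / ((2 ^ j * m : ℕ) : ℝ)) * S (2 ^ j * m) := by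
      rw [hcast, one_div, inv_mul_eq_div, le_div_iff₀ hNpos]
      have hmul : δ * (2 ^ j * (m:ℝ)) = 2 ^ j * (S m - K) := by
        rw [hδdef]; field_simp
      rw [hmul]
      linarith [hiter j]
    exact absurd hj (not_lt.mpr hge)
  obtain ⟨n, hn⟩ := hexists
  have hθ5 : (0:ℝ) < 1 / (5 * θ) := by positivity
  set φ : H := ∑ i ∈ Finset.range n, (Q ^ i) f with hφ
  have hAφ : (1 - Q) φ = f - (Q ^ n) f := by
    have h1 : (1 - Q) φ = ∑ i ∈ Finset.range n, ((Q ^ i) f - (Q ^ (i+1)) f) := by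
      rw [hφ, map_sum]
      refine Finset.sum_congr rfl fun i _ => ?_
      rw [pow_succ']
      simp [ContinuousLinearMap.sub_apply, ContinuousLinearMap.one_apply,
        ContinuousLinearMap.mul_apply]
    rw [h1, Finset.sum_range_sub' (fun i => (Q ^ i) f)]
    simp
  have hshift : ∀ i : ℕ, ⟪(Q ^ i) f, (Q ^ n) f⟫ = a (n + i) := by
    intro i
    have hsym := ContinuousLinearMap.isSelfAdjoint_iff_isSymmetric.mp (hQsa.pow n)
    have h1 : ⟪(Q ^ n) ((Q ^ i) f), f⟫ = ⟪(Q ^ i) f, (Q ^ n) f⟫ := hsym _ f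
    rw [← h1]
    have h2 : (Q ^ n) ((Q ^ i) f) = (Q ^ (n + i)) f := by
      rw [pow_add, ContinuousLinearMap.mul_apply]
    rw [h2]
  have hip : ⟪φ, (1 - Q) φ⟫ = 2 * S n - S (2 * n) := by
    rw [hAφ, inner_sub_right]
    have h1 : ⟪φ, f⟫ = S n := by
      rw [hφ, sum_inner]
    have h2 : ⟪φ, (Q ^ n) f⟫ = ∑ i ∈ Finset.range n, a (n + i) := by
      rw [hφ, sum_inner]
      exact Finset.sum_congr rfl fun i _ => hshift i
    have h3 : S (2 * n) = S n + ∑ i ∈ Finset.range n, a (n + i) := by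
      show (∑ i ∈ Finset.range (2 * n), a i) = (∑ i ∈ Finset.range n, a i) + _
      rw [two_mul, Finset.sum_range_add]
    rw [h1, h2]
    linarith
  have hDpos : 0 < ⟪φ, (1 - Q) φ⟫ := by rw [hip]; linarith
  refine ⟨φ, ?_, hDpos⟩
  have hnorm2 : ‖(1 - Q) φ‖ ≤ 2 := by
    rw [hAφ]
    calc ‖f - (Q ^ n) f‖ ≤ ‖f‖ + ‖(Q ^ n) f‖ := norm_sub_le _ _
    _ ≤ 1 + 1 := by rw [hf]; linarith [hpow n]
    _ = 2 := by norm_num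
  have hval : 32 * θ * (1 / (5 * θ)) = 32 / 5 := by field_simp
  calc ‖(1 - Q) φ‖ ^ 2 ≤ 2 ^ 2 := by
        exact pow_le_pow_left₀ (norm_nonneg _) hnorm2 2
  _ = 4 := by norm_num
  _ ≤ 32 / 5 := by norm_num
  _ = 32 * θ * (1 / (5 * θ)) := hval.symm
  _ ≤ 32 * θ * ⟪φ, (1 - Q) φ⟫ := by
      rw [hip]
      exact mul_le_mul_of_nonneg_left hn (by positivity)
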